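/- Let $\beta^*$ minimize $\mathcal{L}(\beta) = \|X(\beta - \beta^0)\|_2^2 + 2\lambda\|\beta\|_1$ over $\mathbb{R}^p$, with $\lambda > 0$. Let $S_0$ be the support of $\beta^0$, $s_0 = |S_0|$, and let $\hat\phi^2(S_0) > 0$ be the compatibility constant. Then $\|X(\beta^* - \beta^0)\|_2^2 + 2\lambda\|\beta^*_{-S_0}\|_1 \le \lambda^2 s_0/\hat\phi^2(S_0)$. -/

import Mathlib

/-- oracle bound for the noiseless Lasso via the compatibility constant. -/
theorem stmt8 (n p : ℕ) (X : Matrix (Fin n) (Fin p) ℝ) (β0 βs : Fin p → ℝ) (lam φ2 : ℝ)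
    (hlam : 0 < lam) (hφ : 0 < φ2)
    (S0 : Finset (Fin p)) (hS0 : S0 = Finset.univ.filter fun j => β0 j ≠ 0)
    (hcompat : ∀ β : Fin p → ℝ, (∑ j ∈ S0, |β j|) = 1 → (∑ j ∈ S0ᶜ, |β j|) ≤ 1 →
      φ2 ≤ (S0.card : ℝ) * ∑ i, (X.mulVec β i) ^ 2)
    (hmin : ∀ β : Fin p → ℝ,
      (∑ i, (X.mulVec (βs - β0) i) ^ 2) + 2 * lam * ∑ j, |βs j|
        ≤ (∑ i, (X.mulVec (β - β0) i) ^ 2) + 2 * lam * ∑ j, |β j|) :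
    (∑ i, (X.mulVec (βs - β0) i) ^ 2) + 2 * lam * ∑ j ∈ S0ᶜ, |βs j|
      ≤ lam ^ 2 * (S0.card : ℝ) / φ2 := by
  set T : ℝ := ∑ i, (X.mulVec (βs - β0) i) ^ 2 with hTdef
  have hT0 : 0 ≤ T := Finset.sum_nonneg fun i _ => sq_nonneg _
  have hβ0zero : ∀ j ∉ S0, β0 j = 0 := by
    intro j hj
    by_contra h
    exact hj (hS0 ▸ Finset.mem_filter.mpr ⟨Finset.mem_univ j, h⟩)
  set a : ℝ := ∑ j ∈ S0, |βs j - β0 j| with hadef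
  set b : ℝ := ∑ j ∈ S0ᶜ, |βs j| with hbdef
  have ha0 : 0 ≤ a := Finset.sum_nonneg fun _ _ => abs_nonneg _
  have hb0 : 0 ≤ b := Finset.sum_nonneg fun _ _ => abs_nonneg _
  -- key inequality: T + lam * b ≤ lam * a
  have key : T + lam * b ≤ lam * a := by
    set L0 : ℝ := ∑ j, |β0 j| with hL0def
    set Ls : ℝ := ∑ j, |βs j| with hLsdef
    have step : ∀ t : ℝ, 0 < t → t ≤ 1 → (2 - t) * T ≤ 2 * lam * (L0 - Ls) := by
      intro t ht0 ht1
      have h1 := hmin (fun j => β0 j + (1 - t) * (βs j - β0 j))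
      have heq : (fun j => β0 j + (1 - t) * (βs j - β0 j)) - β0 = (1 - t) • (βs - β0) := by
        funext j
        simp only [Pi.sub_apply, Pi.smul_apply, smul_eq_mul]
        ring
      rw [heq] at h1
      have h2 : (∑ i, (X.mulVec ((1 - t) • (βs - β0)) i) ^ 2) = (1 - t) ^ 2 * T := by
        rw [hTdef, Finset.mul_sum]
        refine Finset.sum_congr rfl fun i _ => ?_
        rw [Matrix.mulVec_smul]
        simp only [Pi.smul_apply, smul_eq_mul]
        ring
      rw [h2] at h1
      have h3 : (∑ j, |β0 j + (1 - t) * (βs j - β0 j)|) ≤ t * L0 + (1 - t) * Ls := by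
        rw [hL0def, hLsdef, Finset.mul_sum, Finset.mul_sum, ← Finset.sum_add_distrib]
        refine Finset.sum_le_sum fun j _ => ?_
        have e : β0 j + (1 - t) * (βs j - β0 j) = t * β0 j + (1 - t) * βs j := by ring
        rw [e]
        calc |t * β0 j + (1 - t) * βs j| ≤ |t * β0 j| + |(1 - t) * βs j| := abs_add_le _ _
          _ = t * |β0 j| + (1 - t) * |βs j| := by
              rw [abs_mul, abs_mul, abs_of_pos ht0, abs_of_nonneg (show (0:ℝ) ≤ 1 - t by linarith)]
      have h3' : 2 * lam * (∑ j, |β0 j + (1 - t) * (βs j - β0 j)|)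
          ≤ 2 * lam * (t * L0 + (1 - t) * Ls) :=
        mul_le_mul_of_nonneg_left h3 (by linarith)
      have h4 : t * ((2 - t) * T) ≤ t * (2 * lam * (L0 - Ls)) := by nlinarith [h1, h3']
      exact le_of_mul_le_mul_left h4 ht0
    have h2T : 2 * T ≤ 2 * lam * (L0 - Ls) := by
      apply le_of_forall_pos_le_add
      intro ε hε
      have htpos : 0 < min 1 (ε / (T + 1)) := lt_min one_pos (div_pos hε (by linarith))
      have h := step _ htpos (min_le_left _ _)
      have hsmall : min 1 (ε / (T + 1)) * T ≤ ε := by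
        calc min 1 (ε / (T + 1)) * T ≤ (ε / (T + 1)) * T :=
              mul_le_mul_of_nonneg_right (min_le_right _ _) hT0
          _ ≤ ε := by
              rw [div_mul_eq_mul_div, div_le_iff₀ (by linarith)]
              nlinarith
      nlinarith [h, hsmall]
    have hL0S : L0 = ∑ j ∈ S0, |β0 j| := by
      rw [hL0def]
      symm
      refine Finset.sum_subset (Finset.subset_univ S0) fun j _ hj => ?_
      rw [hβ0zero j hj, abs_zero]
    have hLsS : Ls = (∑ j ∈ S0, |βs j|) + b := by
      rw [hLsdef, hbdef, Finset.sum_add_sum_compl]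
    have hdiff : (∑ j ∈ S0, |β0 j|) - (∑ j ∈ S0, |βs j|) ≤ a := by
      rw [hadef, ← Finset.sum_sub_distrib]
      refine Finset.sum_le_sum fun j _ => ?_
      calc |β0 j| - |βs j| ≤ |β0 j - βs j| := abs_sub_abs_le_abs_sub _ _
        _ = |βs j - β0 j| := abs_sub_comm _ _
    have hfinal : L0 - Ls ≤ a - b := by rw [hL0S, hLsS]; linarith
    nlinarith [mul_le_mul_of_nonneg_left hfinal hlam.le]
  rcases eq_or_lt_of_le ha0 with haz | hap
  · -- a = 0 case
    rw [← haz, mul_zero] at key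
    have hrhs : 0 ≤ lam ^ 2 * (S0.card : ℝ) / φ2 := div_nonneg (mul_nonneg (sq_nonneg _) (Nat.cast_nonneg _)) hφ.le
    nlinarith [mul_nonneg hlam.le hb0]
  · -- a > 0 case
    have hS0ne : S0.Nonempty := by
      by_contra h
      rw [Finset.not_nonempty_iff_eq_empty] at h
      rw [hadef, h, Finset.sum_empty] at hap
      exact lt_irrefl _ hap
    have hs0 : 0 < (S0.card : ℝ) := by
      exact_mod_cast Finset.card_pos.mpr hS0ne
    have hba : b ≤ a := by nlinarith
    -- apply compatibility to (βs - β0)/a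
    have hc1 : (∑ j ∈ S0, |(βs j - β0 j) / a|) = 1 := by
      have : ∀ j, |(βs j - β0 j) / a| = |βs j - β0 j| / a := by
        intro j; rw [abs_div, abs_of_pos hap]
      simp_rw [this]
      rw [← Finset.sum_div, ← hadef, div_self (ne_of_gt hap)]
    have hc2 : (∑ j ∈ S0ᶜ, |(βs j - β0 j) / a|) ≤ 1 := by
      have he : ∀ j ∈ S0ᶜ, |(βs j - β0 j) / a| = |βs j| / a := by
        intro j hj
        rw [hβ0zero j (Finset.mem_compl.mp hj), sub_zero, abs_div, abs_of_pos hap]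
      rw [Finset.sum_congr rfl he, ← Finset.sum_div, ← hbdef, div_le_one hap]
      exact hba
    have hcomp := hcompat (fun j => (βs j - β0 j) / a) hc1 hc2
    have hmveq : (∑ i, (X.mulVec (fun j => (βs j - β0 j) / a) i) ^ 2) = T / a ^ 2 := by
      have hfe : (fun j => (βs j - β0 j) / a) = a⁻¹ • (βs - β0) := by
        funext j
        simp [div_eq_inv_mul]
      rw [hfe, hTdef, Finset.sum_div]
      refine Finset.sum_congr rfl fun i _ => ?_
      rw [Matrix.mulVec_smul]
      simp only [Pi.smul_apply, smul_eq_mul]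
      field_simp
    rw [hmveq] at hcomp
    have hcomp2 : φ2 * a ^ 2 ≤ (S0.card : ℝ) * T := by
      rw [← mul_div_assoc, le_div_iff₀ (by positivity : (0:ℝ) < a ^ 2)] at hcomp
      exact hcomp
    rw [le_div_iff₀ hφ]
    have h5 : ((T + 2 * lam * b) * φ2) * (S0.card : ℝ) ≤ (lam ^ 2 * (S0.card : ℝ)) * (S0.card : ℝ) := by
      nlinarith [sq_nonneg (lam * (S0.card : ℝ) - φ2 * a),
        mul_le_mul_of_nonneg_left key (by positivity : (0:ℝ) ≤ 2 * φ2 * (S0.card : ℝ)),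
        mul_le_mul_of_nonneg_left hcomp2 hφ.le]
    exact le_of_mul_le_mul_right h5 hs0
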